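/- The Tanny polynomials F_n(q) = Σ_{k=0}^n k!·S(n,k)·q^k, where S(n,k) are the Stirling numbers of the second kind, are strongly q-log-convex: for all n ≥ m ≥ 1, the polynomial F_{m-1}(q)·F_{n+1}(q) − F_m(q)·F_n(q) has only nonnegative coefficients. -/

import Mathlib

open Polynomial

/-- The Stirling numbers of the second kind: `S(0,0) = 1`, `S(n,k) = 0` for `k > n`,
and `S(n,k) = k·S(n-1,k) + S(n-1,k-1)` for `n, k ≥ 1`. -/
def stirling2 : ℕ → ℕ → ℕ
  | 0, 0 => 1
  | 0, _ + 1 => 0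
  | _ + 1, 0 => 0
  | n + 1, k + 1 => (k + 1) * stirling2 n (k + 1) + stirling2 n k

/-- The Tanny polynomial `F_n(q) = Σ_{k=0}^n k!·S(n,k)·q^k`. -/
noncomputable def tannyPoly (n : ℕ) : Polynomial ℝ :=
  ∑ k ∈ Finset.range (n + 1), C ((Nat.factorial k * stirling2 n k : ℕ) : ℝ) * X ^ k

lemma stirling2_eq_zero : ∀ {n k : ℕ}, n < k → stirling2 n k = 0
  | 0, _ + 1, _ => rfl
  | n + 1, k + 1, h => by
      have h1 : n < k + 1 := by omega
      have h2 : n < k := by omega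
      show (k + 1) * stirling2 n (k + 1) + stirling2 n k = 0
      rw [stirling2_eq_zero h1, stirling2_eq_zero h2, mul_zero]

lemma stirling2_succ_succ (n k : ℕ) :
    stirling2 (n+1) (k+1) = (k + 1) * stirling2 n (k + 1) + stirling2 n k := rfl

/-- TP₂ property (nonnegativity of 2×2 minors) of the Stirling triangle. -/
lemma stirling2_tp2 : ∀ n m j k : ℕ, n ≤ m → j ≤ k →
    stirling2 n k * stirling2 m j ≤ stirling2 n j * stirling2 m k := by
  intro n
  induction n with
  | zero =>
    intro m j k _ hjk
    match j, k, hjk with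
    | 0, 0, _ => exact le_refl _
    | 0, k + 1, _ => simp [show stirling2 0 (k+1) = 0 from rfl]
    | j + 1, k + 1, _ =>
        simp [show stirling2 0 (k+1) = 0 from rfl, show stirling2 0 (j+1) = 0 from rfl]
  | succ n ih =>
    intro m j k hnm hjk
    obtain ⟨m, rfl⟩ : ∃ m', m = m' + 1 := ⟨m - 1, by omega⟩
    match j, k, hjk with
    | 0, k, _ => simp [show stirling2 (m+1) 0 = 0 from rfl]
    | j + 1, k + 1, hjk =>
        rcases eq_or_lt_of_le hjk with h | h
        · rw [show j + 1 = k + 1 by omega]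
        · have hnm' : n ≤ m := by omega
          have h1 := ih m (j+1) (k+1) hnm' (by omega)
          have h2 := ih m j (k+1) hnm' (by omega)
          have h3 := ih m (j+1) k hnm' (by omega)
          have h4 := ih m j k hnm' (by omega)
          rw [stirling2_succ_succ n k, stirling2_succ_succ n j,
              stirling2_succ_succ m k, stirling2_succ_succ m j]
          nlinarith [Nat.mul_le_mul_left ((k+1)*(j+1)) h1, Nat.mul_le_mul_left (k+1) h2,
            Nat.mul_le_mul_left (j+1) h3, h4]

/-- The real coefficients `k!·S(n,k)` of the Tanny polynomial. -/
noncomputable def tc (n k : ℕ) : ℝ := ((Nat.factorial k * stirling2 n k : ℕ) : ℝ)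

lemma coeff_tanny (n k : ℕ) : (tannyPoly n).coeff k = tc n k := by
  rw [tannyPoly, Polynomial.finset_sum_coeff]
  simp only [Polynomial.coeff_C_mul, Polynomial.coeff_X_pow, mul_ite, mul_one, mul_zero]
  rw [Finset.sum_ite_eq (Finset.range (n+1)) k]
  by_cases h : k ≤ n
  · simp [Finset.mem_range, Nat.lt_succ_of_le h, tc]
  · simp [Finset.mem_range, show ¬ k < n + 1 by omega, tc,
      stirling2_eq_zero (show n < k by omega)]

lemma tc_succ (n k : ℕ) : tc (n+1) k = k * tc n k + k * tc n (k-1) := by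
  cases k with
  | zero => simp [tc, show stirling2 (n+1) 0 = 0 from rfl]
  | succ k =>
      simp only [tc, stirling2_succ_succ, Nat.factorial_succ, Nat.add_sub_cancel]
      push_cast
      ring

/-- TP₂ for the scaled triangle `tc`. -/
lemma tc_tp2 {n m j k : ℕ} (hnm : n ≤ m) (hjk : j ≤ k) :
    tc n k * tc m j ≤ tc n j * tc m k := by
  have h := stirling2_tp2 n m j k hnm hjk
  have h' : j.factorial * k.factorial * (stirling2 n k * stirling2 m j)
      ≤ j.factorial * k.factorial * (stirling2 n j * stirling2 m k) :=
    Nat.mul_le_mul_left _ h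
  have h'' : (j.factorial : ℝ) * k.factorial * (stirling2 n k * stirling2 m j)
      ≤ (j.factorial : ℝ) * k.factorial * (stirling2 n j * stirling2 m k) := by
    exact_mod_cast h'
  simp only [tc]
  push_cast
  nlinarith [h'']

/-- The key signed sum over an antidiagonal is nonnegative. -/
lemma key_sum_nonneg {a b : ℕ} (hab : a ≤ b) (N : ℕ) :
    0 ≤ ∑ p ∈ Finset.HasAntidiagonal.antidiagonal N, ((p.2 : ℝ) - p.1) * (tc a p.1 * tc b p.2) := by
  have hswap : ∑ p ∈ Finset.HasAntidiagonal.antidiagonal N, ((p.2 : ℝ) - p.1) * (tc a p.1 * tc b p.2)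
      = ∑ p ∈ Finset.HasAntidiagonal.antidiagonal N, ((p.1 : ℝ) - p.2) * (tc a p.2 * tc b p.1) := by
    exact (Finset.Nat.sum_antidiagonal_swap
      (f := fun p => ((p.2 : ℝ) - p.1) * (tc a p.1 * tc b p.2))).symm
  have h2 : (2:ℝ) * ∑ p ∈ Finset.HasAntidiagonal.antidiagonal N, ((p.2 : ℝ) - p.1) * (tc a p.1 * tc b p.2)
      = ∑ p ∈ Finset.HasAntidiagonal.antidiagonal N,
          ((p.2 : ℝ) - p.1) * (tc a p.1 * tc b p.2 - tc a p.2 * tc b p.1) := by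
    rw [two_mul]
    nth_rewrite 2 [hswap]
    rw [← Finset.sum_add_distrib]
    apply Finset.sum_congr rfl
    intro p _
    ring
  have hterm : ∀ p ∈ Finset.HasAntidiagonal.antidiagonal N,
      0 ≤ ((p.2 : ℝ) - p.1) * (tc a p.1 * tc b p.2 - tc a p.2 * tc b p.1) := by
    intro p _
    rcases le_total p.1 p.2 with h | h
    · apply mul_nonneg
      · simp only [sub_nonneg]; exact_mod_cast h
      · simp only [sub_nonneg]; exact tc_tp2 hab h
    · apply mul_nonneg_of_nonpos_of_nonpos
      · simp only [sub_nonpos]; exact_mod_cast h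
      · simp only [sub_nonpos]; exact tc_tp2 hab h
  nlinarith [Finset.sum_nonneg hterm, h2]

/-- The Tanny polynomials are strongly `q`-log-convex: for all
`n ≥ m ≥ 1`, the polynomial `F_{m-1}·F_{n+1} − F_m·F_n` has nonnegative coefficients. -/
theorem tannyPoly_strongly_q_log_convex :
    ∀ m n : ℕ, 1 ≤ m → m ≤ n →
      ∀ i : ℕ,
        0 ≤ (tannyPoly (m - 1) * tannyPoly (n + 1)
              - tannyPoly m * tannyPoly n).coeff i := by
  intro m n hm hmn i
  obtain ⟨m, rfl⟩ : ∃ m', m = m' + 1 := ⟨m - 1, by omega⟩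
  have hmn' : m ≤ n := by omega
  rw [Polynomial.coeff_sub, Polynomial.coeff_mul, Polynomial.coeff_mul]
  simp only [coeff_tanny, Nat.add_sub_cancel]
  have expand : ∀ p : ℕ × ℕ, tc m p.1 * tc (n+1) p.2 - tc (m+1) p.1 * tc n p.2
      = ((p.2:ℝ) - p.1) * (tc m p.1 * tc n p.2)
        + (p.2:ℝ) * (tc m p.1 * tc n (p.2-1)) - (p.1:ℝ) * (tc m (p.1-1) * tc n p.2) := by
    intro p
    rw [tc_succ, tc_succ]
    ring
  rw [← Finset.sum_sub_distrib]
  have hsum : ∑ p ∈ Finset.HasAntidiagonal.antidiagonal i,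
        (tc m p.1 * tc (n+1) p.2 - tc (m+1) p.1 * tc n p.2)
      = (∑ p ∈ Finset.HasAntidiagonal.antidiagonal i, ((p.2:ℝ) - p.1) * (tc m p.1 * tc n p.2))
        + ((∑ p ∈ Finset.HasAntidiagonal.antidiagonal i, (p.2:ℝ) * (tc m p.1 * tc n (p.2-1)))
          - (∑ p ∈ Finset.HasAntidiagonal.antidiagonal i, (p.1:ℝ) * (tc m (p.1-1) * tc n p.2))) := by
    rw [← Finset.sum_sub_distrib, ← Finset.sum_add_distrib]
    exact Finset.sum_congr rfl fun p _ => by rw [expand p]; ring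
  rw [hsum]
  cases i with
  | zero =>
      simp [Finset.Nat.antidiagonal_zero]
  | succ N =>
      have hT : (∑ p ∈ Finset.HasAntidiagonal.antidiagonal (N+1), (p.2:ℝ) * (tc m p.1 * tc n (p.2-1)))
          - (∑ p ∈ Finset.HasAntidiagonal.antidiagonal (N+1), (p.1:ℝ) * (tc m (p.1-1) * tc n p.2))
          = ∑ p ∈ Finset.HasAntidiagonal.antidiagonal N, ((p.2:ℝ) - p.1) * (tc m p.1 * tc n p.2) := by
        rw [Finset.Nat.sum_antidiagonal_succ'
            (f := fun p : ℕ × ℕ => (p.2:ℝ) * (tc m p.1 * tc n (p.2-1))),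
          Finset.Nat.sum_antidiagonal_succ
            (f := fun p : ℕ × ℕ => (p.1:ℝ) * (tc m (p.1-1) * tc n p.2))]
        simp only [Nat.cast_zero, zero_mul, Nat.add_sub_cancel, Nat.cast_add, Nat.cast_one,
          zero_add]
        rw [← Finset.sum_sub_distrib]
        exact Finset.sum_congr rfl fun p _ => by ring
      rw [hT]
      have h1 := key_sum_nonneg hmn' (N+1)
      have h2 := key_sum_nonneg hmn' N
      linarith
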